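/- For every α ∈ ℂ, the special conformal operators in holographic coordinates raise the scale dimension of the holographic solutions by one unit: writing υ^α(θ, φ) = e^{iαφ} (sin θ)^α, for all θ ∈ (0, π/2) and φ ∈ ℝ one has (cos φ · sin θ · tan θ · ∂_θ + sin φ · sin θ · ∂_φ) υ^α = α · υ^{α+1} and (sin φ · sin θ · tan θ · ∂_θ − cos φ · sin θ · ∂_φ) υ^α = −i α · υ^{α+1}. -/

import Mathlib

noncomputable section

/-- The holographic solution `υ^α(θ, φ) = e^{iαφ} (sin θ)^α`, where
`(sin θ)^α = exp(α log(sin θ))` for `θ ∈ (0, π/2)`. -/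
def υ (α : ℂ) (θ φ : ℝ) : ℂ :=
  Complex.exp (Complex.I * α * φ) * Complex.exp (α * Real.log (Real.sin θ))

/-- For every `α ∈ ℂ`, the special conformal operators
`q₀ = cos φ sin θ tan θ ∂_θ + sin φ sin θ ∂_φ` and
`q₁ = sin φ sin θ tan θ ∂_θ − cos φ sin θ ∂_φ`
raise the scale dimension of `υ^α` by one unit:
`q₀ υ^α = α υ^{α+1}` and `q₁ υ^α = −iα υ^{α+1}`. -/
theorem special_conformal_raises_scale_dimension (α : ℂ) (θ φ : ℝ)
    (hθ : θ ∈ Set.Ioo 0 (Real.pi / 2)) :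
    (Real.cos φ : ℂ) * (Real.sin θ : ℂ) * (Real.tan θ : ℂ) * deriv (fun t => υ α t φ) θ
        + (Real.sin φ : ℂ) * (Real.sin θ : ℂ) * deriv (fun p => υ α θ p) φ =
      α * υ (α + 1) θ φ ∧
    (Real.sin φ : ℂ) * (Real.sin θ : ℂ) * (Real.tan θ : ℂ) * deriv (fun t => υ α t φ) θ
        - (Real.cos φ : ℂ) * (Real.sin θ : ℂ) * deriv (fun p => υ α θ p) φ =
      -(Complex.I * α * υ (α + 1) θ φ) := by
  have hs : 0 < Real.sin θ :=
    Real.sin_pos_of_pos_of_lt_pi hθ.1 (hθ.2.trans (by linarith [Real.pi_pos]))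
  have hc : 0 < Real.cos θ := Real.cos_pos_of_mem_Ioo ⟨by linarith [hθ.1, Real.pi_pos], hθ.2⟩
  -- derivative in θ
  have hθd : HasDerivAt (fun t => υ α t φ)
      (Complex.exp (Complex.I * α * φ) * (Complex.exp (α * Real.log (Real.sin θ)) *
        (α * (Real.cos θ / Real.sin θ)))) θ := by
    have h1 : HasDerivAt (fun t => Real.log (Real.sin t)) (Real.cos θ / Real.sin θ) θ :=
      (Real.hasDerivAt_sin θ).log hs.ne'
    have h2 : HasDerivAt (fun t => ((Real.log (Real.sin t) : ℂ))) ((Real.cos θ / Real.sin θ : ℝ) : ℂ) θ :=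
      h1.ofReal_comp
    have h3 := (h2.const_mul α).cexp
    exact (h3.const_mul (Complex.exp (Complex.I * α * φ))).congr_deriv (by push_cast; ring)
  -- derivative in φ
  have hφd : HasDerivAt (fun p : ℝ => υ α θ p)
      (Complex.I * α * Complex.exp (Complex.I * α * φ) *
        Complex.exp (α * Real.log (Real.sin θ))) φ := by
    have h1 : HasDerivAt (fun p : ℝ => ((p : ℂ))) 1 φ := (hasDerivAt_id φ).ofReal_comp
    have h2 := ((h1.const_mul (Complex.I * α)).cexp).mul_const
      (Complex.exp (α * Real.log (Real.sin θ)))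
    exact h2.congr_deriv (by ring)
  rw [hθd.deriv, hφd.deriv]
  have htan : (Real.tan θ : ℂ) = (Real.sin θ : ℂ) / (Real.cos θ : ℂ) := by
    rw [Real.tan_eq_sin_div_cos]; push_cast; ring
  have hexp : Complex.exp ((α + 1) * Real.log (Real.sin θ)) =
      Complex.exp (α * Real.log (Real.sin θ)) * (Real.sin θ : ℂ) := by
    rw [add_mul, one_mul, Complex.exp_add]
    congr 1
    rw [← Complex.ofReal_exp, Real.exp_log hs]
  have hexpφ : Complex.exp (Complex.I * (α + 1) * φ) =
      Complex.exp (Complex.I * α * φ) * ((Real.cos φ : ℂ) + (Real.sin φ : ℂ) * Complex.I) := by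
    rw [show Complex.I * (α + 1) * φ = Complex.I * α * φ + φ * Complex.I by ring,
      Complex.exp_add, Complex.exp_mul_I, Complex.ofReal_cos, Complex.ofReal_sin]
  have hcs : (Real.cos θ : ℂ) ≠ 0 := by exact_mod_cast hc.ne'
  have hss : (Real.sin θ : ℂ) ≠ 0 := by exact_mod_cast hs.ne'
  have hss' : Complex.sin (θ : ℂ) ≠ 0 := by
    rw [← Complex.ofReal_sin]; exact_mod_cast hs.ne'
  have hcs' : Complex.cos (θ : ℂ) ≠ 0 := by
    rw [← Complex.ofReal_cos]; exact_mod_cast hc.ne'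
  refine ⟨?_, ?_⟩
  · simp only [υ, hexp, hexpφ, htan]
    field_simp
  · simp only [υ, hexp, hexpφ, htan]
    field_simp
    ring_nf
    simp only [Complex.I_sq]
    ring
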